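/- Let ν be a Lévy measure on ℝ that is absolutely continuous with respect to Lebesgue measure, with ν(ℝ) = ∞ and ∫ |y|^k ν(dy) < ∞ for k = 2, 3, 4. Set c = √(√2 − 1). For Λ > 0 let ε = ε(Λ) > 0 be the unique solution of F(ε) := ∫_{{|y|>cε}} ν(dy) + ε^{−2} ∫_{{|y|≤cε}} y² ν(dy) = Λ (F is continuous, strictly decreasing, F(ε) → +∞ as ε ↓ 0 and F(ε) → 0 as ε → ∞), and define α_1 = (1/(2ε³)) ( − ∫_{{|y|≤cε}} y³ ν(dy) + ε ∫_{{|y|≤cε}} y² ν(dy) ) and α_2 = (1/(2ε³)) ( ∫_{{|y|≤cε}} y³ ν(dy) + ε ∫_{{|y|≤cε}} y² ν(dy) ). Then α_1 ≥ 0 and α_2 ≥ 0, the measure ν̄_ε(dy) = 1_{{|y|>cε}} ν(dy) + α_1 δ_{−ε}(dy) + α_2 δ_ε(dy) is a solution of problem Ω_{4,Λ}, and the optimal value satisfies E_4(Λ) = o(Λ^{−1}) as Λ → ∞. -/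

import Mathlib

open MeasureTheory Filter Set
open scoped ENNReal

/-- The total variation measure `|μ - ν| = (μ - μ⊓ν) + (ν - μ⊓ν)` of the difference of two
positive measures. -/
noncomputable def tvDist (μ ν : Measure ℝ) : Measure ℝ := (μ - μ ⊓ ν) + (ν - μ ⊓ ν)

/-- The functional `J(ν̄) = ∫ y⁴ |ν - ν̄|(dy)`. -/
noncomputable def Jfun4 (ν νb : Measure ℝ) : ℝ≥0∞ :=
  ∫⁻ y, ENNReal.ofReal (y ^ 4) ∂(tvDist ν νb)

/-- The constraint set of problem `Ω_{4,Λ}`: finite measures of mass `Λ` matching the second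
and third moments of `ν`. -/
def Constraint4 (ν : Measure ℝ) (Λ : ℝ) (νb : Measure ℝ) : Prop :=
  IsFiniteMeasure νb ∧ νb Set.univ = ENNReal.ofReal Λ ∧
    MeasureTheory.Integrable (fun y => y ^ 2) νb ∧ (∫ y, y ^ 2 ∂νb) = (∫ y, y ^ 2 ∂ν) ∧
    MeasureTheory.Integrable (fun y => y ^ 3) νb ∧ (∫ y, y ^ 3 ∂νb) = ∫ y, y ^ 3 ∂ν

/-- The constant `c = √(√2 - 1)`. -/
noncomputable def cConst : ℝ := Real.sqrt (Real.sqrt 2 - 1)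

/-- `α₁ = (1/(2ε³)) (−∫_{|y|≤cε} y³ ν(dy) + ε ∫_{|y|≤cε} y² ν(dy))`. -/
noncomputable def alpha₁ (ν : Measure ℝ) (ε : ℝ) : ℝ :=
  (1 / (2 * ε ^ 3)) * (-(∫ y in {y : ℝ | |y| ≤ cConst * ε}, y ^ 3 ∂ν)
    + ε * ∫ y in {y : ℝ | |y| ≤ cConst * ε}, y ^ 2 ∂ν)

/-- `α₂ = (1/(2ε³)) (∫_{|y|≤cε} y³ ν(dy) + ε ∫_{|y|≤cε} y² ν(dy))`. -/
noncomputable def alpha₂ (ν : Measure ℝ) (ε : ℝ) : ℝ :=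
  (1 / (2 * ε ^ 3)) * ((∫ y in {y : ℝ | |y| ≤ cConst * ε}, y ^ 3 ∂ν)
    + ε * ∫ y in {y : ℝ | |y| ≤ cConst * ε}, y ^ 2 ∂ν)

/-- The approximating measure `ν̄_ε = 1_{|y|>cε} ν + α₁ δ_{-ε} + α₂ δ_ε`. -/
noncomputable def approx4 (ν : Measure ℝ) (ε : ℝ) : Measure ℝ :=
  ν.restrict {y : ℝ | cConst * ε < |y|}
    + ENNReal.ofReal (alpha₁ ν ε) • Measure.dirac (-ε)
    + ENNReal.ofReal (alpha₂ ν ε) • Measure.dirac ε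

/-- The function `F(ε) = ∫_{|y|>cε} ν(dy) + ε⁻² ∫_{|y|≤cε} y² ν(dy)`. -/
noncomputable def F4 (ν : Measure ℝ) (ε : ℝ) : ℝ :=
  (ν {y : ℝ | cConst * ε < |y|}).toReal
    + ε⁻¹ ^ 2 * ∫ y in {y : ℝ | |y| ≤ cConst * ε}, y ^ 2 ∂ν


section Aux


lemma cSq : cConst ^ 2 = Real.sqrt 2 - 1 := by
  have h : (0:ℝ) ≤ Real.sqrt 2 - 1 := by
    nlinarith [Real.sq_sqrt (by norm_num : (2:ℝ) ≥ 0), Real.sqrt_nonneg 2]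
  rw [cConst, Real.sq_sqrt h]

lemma sqrt2_lt : Real.sqrt 2 < 2 := by
  nlinarith [Real.sq_sqrt (by norm_num : (2:ℝ) ≥ 0), Real.sqrt_nonneg 2]

lemma sqrt2_gt : 1 < Real.sqrt 2 := by
  nlinarith [Real.sq_sqrt (by norm_num : (2:ℝ) ≥ 0), Real.sqrt_nonneg 2]

lemma cPos : 0 < cConst := Real.sqrt_pos.2 (by linarith [sqrt2_gt])

lemma cLt1 : cConst < 1 := by
  nlinarith [cSq, cPos, sqrt2_lt]

noncomputable def phi (e y : ℝ) : ℝ := min (y ^ 4) (e ^ 4 - 2 * e ^ 2 * y ^ 2)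

lemma phi_le (e y : ℝ) : phi e y ≤ y ^ 4 := min_le_left _ _

lemma phi_le_quad (e y : ℝ) : phi e y ≤ e ^ 4 - 2 * e ^ 2 * y ^ 2 := min_le_right _ _

lemma neg_le_phi (e y : ℝ) : -(y ^ 4) ≤ phi e y :=
  le_min (by nlinarith [sq_nonneg (y^2)]) (by nlinarith [sq_nonneg (y^2 - e^2)])

lemma abs_phi_le (e y : ℝ) : |phi e y| ≤ y ^ 4 :=
  abs_le.2 ⟨by simpa using neg_le_phi e y, phi_le e y⟩

lemma phi_inner {e y : ℝ} (he : 0 ≤ e) (h : |y| ≤ cConst * e) : phi e y = y ^ 4 := by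
  have h2 : y ^ 2 ≤ cConst ^ 2 * e ^ 2 := by
    have := abs_nonneg y
    calc y ^ 2 = |y| ^ 2 := (sq_abs y).symm
    _ ≤ (cConst * e) ^ 2 := by nlinarith
    _ = cConst ^ 2 * e ^ 2 := by ring
  refine min_eq_left ?_
  have s2 : Real.sqrt 2 ^ 2 = 2 := Real.sq_sqrt (by norm_num)
  rw [cSq] at h2
  have key : e ^ 4 - 2 * e ^ 2 * y ^ 2 - y ^ 4
      = ((Real.sqrt 2 - 1) * e ^ 2 - y ^ 2) * (y ^ 2 + (Real.sqrt 2 + 1) * e ^ 2) := by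
    linear_combination (-(e^4)) * s2
  have hD : (0:ℝ) ≤ y ^ 2 + (Real.sqrt 2 + 1) * e ^ 2 := by
    nlinarith [sq_nonneg y, sq_nonneg e, sqrt2_gt]
  nlinarith [mul_nonneg (sub_nonneg.2 h2) hD, mul_nonneg (sub_nonneg.2 h2) hD, key]

lemma phi_outer {e y : ℝ} (he : 0 ≤ e) (h : cConst * e ≤ |y|) : phi e y = e ^ 4 - 2 * e ^ 2 * y ^ 2 := by
  have h2 : cConst ^ 2 * e ^ 2 ≤ y ^ 2 := by
    have h0 : 0 ≤ cConst * e := mul_nonneg cPos.le he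
    calc cConst ^ 2 * e ^ 2 = (cConst * e) ^ 2 := by ring
    _ ≤ |y| ^ 2 := by nlinarith [abs_nonneg y]
    _ = y ^ 2 := sq_abs y
  refine min_eq_right ?_
  have s2 : Real.sqrt 2 ^ 2 = 2 := Real.sq_sqrt (by norm_num)
  rw [cSq] at h2
  have key : e ^ 4 - 2 * e ^ 2 * y ^ 2 - y ^ 4
      = ((Real.sqrt 2 - 1) * e ^ 2 - y ^ 2) * (y ^ 2 + (Real.sqrt 2 + 1) * e ^ 2) := by
    linear_combination (-(e^4)) * s2
  have hD : (0:ℝ) ≤ y ^ 2 + (Real.sqrt 2 + 1) * e ^ 2 := by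
    nlinarith [sq_nonneg y, sq_nonneg e, sqrt2_gt]
  nlinarith [mul_nonneg (sub_nonneg.2 h2) hD, mul_nonneg (sub_nonneg.2 h2) hD, key]

lemma phi_continuous (e : ℝ) : Continuous (phi e) := by
  apply Continuous.min <;> continuity



def Iset (e : ℝ) : Set ℝ := {y : ℝ | |y| ≤ cConst * e}
def Oset (e : ℝ) : Set ℝ := {y : ℝ | cConst * e < |y|}

lemma measIset (e : ℝ) : MeasurableSet (Iset e) :=
  (isClosed_le continuous_abs continuous_const).measurableSet

lemma measOset (e : ℝ) : MeasurableSet (Oset e) :=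
  (isOpen_lt continuous_const continuous_abs).measurableSet

lemma Oset_eq_compl (e : ℝ) : Oset e = (Iset e)ᶜ := by
  ext y; simp [Iset, Oset, not_le]

variable {ν : Measure ℝ}

lemma integrable_of_ofReal {f : ℝ → ℝ} (hf : Measurable f) (h0 : 0 ≤ f)
    (h : (∫⁻ y, ENNReal.ofReal (f y) ∂ν) < ⊤) : Integrable f ν :=
  ⟨hf.aestronglyMeasurable, (hasFiniteIntegral_iff_ofReal (ae_of_all _ h0)).2 h⟩

lemma int2 (hν2 : (∫⁻ y, ENNReal.ofReal (y ^ 2) ∂ν) < ⊤) :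
    Integrable (fun y : ℝ => y ^ 2) ν :=
  integrable_of_ofReal (by measurability) (fun y => sq_nonneg y) hν2

lemma int4 (hν4 : (∫⁻ y, ENNReal.ofReal (y ^ 4) ∂ν) < ⊤) :
    Integrable (fun y : ℝ => y ^ 4) ν :=
  integrable_of_ofReal (by measurability) (fun y => by positivity) hν4

lemma int3 (hν3 : (∫⁻ y, ENNReal.ofReal (|y| ^ 3) ∂ν) < ⊤) :
    Integrable (fun y : ℝ => y ^ 3) ν := by
  have habs : Integrable (fun y : ℝ => |y| ^ 3) ν :=
    integrable_of_ofReal (by measurability) (fun y => by positivity) hν3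
  refine habs.mono (by measurability) (ae_of_all _ fun y => ?_)
  simp [abs_pow, abs_abs]

lemma split_integral {f : ℝ → ℝ} (hf : Integrable f ν) (e : ℝ) :
    (∫ y, f y ∂ν) = (∫ y in Oset e, f y ∂ν) + ∫ y in Iset e, f y ∂ν := by
  have h := integral_add_measure (μ := ν.restrict (Iset e)) (ν := ν.restrict (Iset e)ᶜ)
    hf.restrict hf.restrict
  rw [Measure.restrict_add_restrict_compl (measIset e)] at h
  rw [Oset_eq_compl, h, add_comm]

lemma outer_fin (hν2 : (∫⁻ y, ENNReal.ofReal (y ^ 2) ∂ν) < ⊤) {e : ℝ} (he : 0 < e) :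
    ν (Oset e) < ⊤ := by
  set c : ℝ≥0∞ := ENNReal.ofReal ((cConst * e) ^ 2) with hc
  have hc0 : c ≠ 0 := by
    simp only [hc, ne_eq, ENNReal.ofReal_eq_zero, not_le]
    exact pow_pos (mul_pos cPos he) 2
  have hsub : Oset e ⊆ {y : ℝ | c ≤ ENNReal.ofReal (y ^ 2)} := by
    intro y hy
    simp only [Oset, mem_setOf_eq] at hy ⊢
    refine ENNReal.ofReal_le_ofReal ?_
    have h0 : 0 ≤ cConst * e := (mul_pos cPos he).le
    calc (cConst * e) ^ 2 ≤ |y| ^ 2 := by nlinarith [abs_nonneg y]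
    _ = y ^ 2 := sq_abs y
  have hm : Measurable fun y : ℝ => ENNReal.ofReal (y ^ 2) := by measurability
  have := mul_meas_ge_le_lintegral (μ := ν) hm c
  have hlt : ν {y : ℝ | c ≤ ENNReal.ofReal (y ^ 2)} < ⊤ := by
    by_contra h
    rw [not_lt, top_le_iff] at h
    rw [h, ENNReal.mul_top hc0] at this
    exact absurd (lt_of_le_of_lt this hν2) (lt_irrefl _)
  exact lt_of_le_of_lt (measure_mono hsub) hlt

lemma integrable_smul_dirac {f : ℝ → ℝ} (hf : Measurable f) {c : ℝ≥0∞} (hc : c ≠ ⊤) (a : ℝ) :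
    Integrable f (c • Measure.dirac a) := by
  refine ⟨hf.aestronglyMeasurable, ?_⟩
  rw [hasFiniteIntegral_iff_norm, lintegral_smul_measure, lintegral_dirac]
  exact ENNReal.mul_lt_top hc.lt_top ENNReal.ofReal_lt_top

variable {ν : Measure ℝ}

lemma m2_nonneg (e : ℝ) : 0 ≤ ∫ y in Iset e, y ^ 2 ∂ν :=
  setIntegral_nonneg (measIset e) fun y _ => sq_nonneg y

lemma alpha_sum {e : ℝ} (he : 0 < e) :
    alpha₁ ν e + alpha₂ ν e = (∫ y in Iset e, y ^ 2 ∂ν) / e ^ 2 := by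
  unfold alpha₁ alpha₂ Iset
  have h3 : e ^ 3 ≠ 0 := by positivity
  have h2 : e ^ 2 ≠ 0 := by positivity
  field_simp
  ring

lemma alpha_diff {e : ℝ} (he : 0 < e) :
    alpha₂ ν e - alpha₁ ν e = (∫ y in Iset e, y ^ 3 ∂ν) / e ^ 3 := by
  unfold alpha₁ alpha₂ Iset
  have h3 : e ^ 3 ≠ 0 := by positivity
  field_simp
  ring

lemma m3_abs (hν2 : (∫⁻ y, ENNReal.ofReal (y ^ 2) ∂ν) < ⊤)
    (hν3 : (∫⁻ y, ENNReal.ofReal (|y| ^ 3) ∂ν) < ⊤) {e : ℝ} (he : 0 < e) :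
    |∫ y in Iset e, y ^ 3 ∂ν| ≤ cConst * e * ∫ y in Iset e, y ^ 2 ∂ν := by
  have h1 : |∫ y in Iset e, y ^ 3 ∂ν| ≤ ∫ y in Iset e, |y| ^ 3 ∂ν := by
    have h0 := norm_integral_le_integral_norm (μ := ν.restrict (Iset e)) (f := fun y : ℝ => y ^ 3)
    simp only [Real.norm_eq_abs, abs_pow] at h0
    exact h0
  refine h1.trans ?_
  have h2 : (∫ y in Iset e, |y| ^ 3 ∂ν) ≤ ∫ y in Iset e, cConst * e * y ^ 2 ∂ν := by
    refine setIntegral_mono_on ((by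
      have : Integrable (fun y : ℝ => |y| ^ 3) ν :=
        integrable_of_ofReal (by measurability) (fun y => by positivity) hν3
      exact this.restrict)) (((int2 hν2).const_mul _).restrict)
      (measIset e) fun y hy => ?_
    have hy' : |y| ≤ cConst * e := hy
    have : |y| ^ 3 = |y| * y ^ 2 := by
      rw [← sq_abs]
      ring
    rw [this]
    have := sq_nonneg y
    nlinarith [abs_nonneg y]
  refine h2.trans ?_
  rw [integral_const_mul]

lemma alpha₁_nonneg (hν2 : (∫⁻ y, ENNReal.ofReal (y ^ 2) ∂ν) < ⊤)
    (hν3 : (∫⁻ y, ENNReal.ofReal (|y| ^ 3) ∂ν) < ⊤) {e : ℝ} (he : 0 < e) :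
    0 ≤ alpha₁ ν e := by
  have hm3 := m3_abs (ν := ν) hν2 hν3 he
  have hm2 := m2_nonneg (ν := ν) e
  have hce : cConst * e ≤ e := by nlinarith [cPos, cLt1]
  have habs := abs_le.1 hm3
  show 0 ≤ (1 / (2 * e ^ 3)) * (-(∫ y in {y : ℝ | |y| ≤ cConst * e}, y ^ 3 ∂ν)
    + e * ∫ y in {y : ℝ | |y| ≤ cConst * e}, y ^ 2 ∂ν)
  have hI2 : (∫ y in {y : ℝ | |y| ≤ cConst * e}, y ^ 2 ∂ν) = ∫ y in Iset e, y ^ 2 ∂ν := rfl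
  have hI3 : (∫ y in {y : ℝ | |y| ≤ cConst * e}, y ^ 3 ∂ν) = ∫ y in Iset e, y ^ 3 ∂ν := rfl
  rw [hI2, hI3]
  have h1 : (0:ℝ) < 1 / (2 * e ^ 3) := by positivity
  have hkey : (∫ y in Iset e, y ^ 3 ∂ν) ≤ e * ∫ y in Iset e, y ^ 2 ∂ν := by
    nlinarith [mul_le_mul_of_nonneg_left hce hm2]
  nlinarith

lemma alpha₂_nonneg (hν2 : (∫⁻ y, ENNReal.ofReal (y ^ 2) ∂ν) < ⊤)
    (hν3 : (∫⁻ y, ENNReal.ofReal (|y| ^ 3) ∂ν) < ⊤) {e : ℝ} (he : 0 < e) :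
    0 ≤ alpha₂ ν e := by
  have hm3 := m3_abs (ν := ν) hν2 hν3 he
  have hm2 := m2_nonneg (ν := ν) e
  have hce : cConst * e ≤ e := by nlinarith [cPos, cLt1]
  have habs := abs_le.1 hm3
  show 0 ≤ (1 / (2 * e ^ 3)) * ((∫ y in {y : ℝ | |y| ≤ cConst * e}, y ^ 3 ∂ν)
    + e * ∫ y in {y : ℝ | |y| ≤ cConst * e}, y ^ 2 ∂ν)
  have hI2 : (∫ y in {y : ℝ | |y| ≤ cConst * e}, y ^ 2 ∂ν) = ∫ y in Iset e, y ^ 2 ∂ν := rfl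
  have hI3 : (∫ y in {y : ℝ | |y| ≤ cConst * e}, y ^ 3 ∂ν) = ∫ y in Iset e, y ^ 3 ∂ν := rfl
  rw [hI2, hI3]
  have h1 : (0:ℝ) < 1 / (2 * e ^ 3) := by positivity
  have hkey : -(∫ y in Iset e, y ^ 3 ∂ν) ≤ e * ∫ y in Iset e, y ^ 2 ∂ν := by
    nlinarith [mul_le_mul_of_nonneg_left hce hm2]
  nlinarith

lemma F4_eq (e : ℝ) : F4 ν e = (ν (Oset e)).toReal + e⁻¹ ^ 2 * ∫ y in Iset e, y ^ 2 ∂ν := rfl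

lemma approx4_eq (e : ℝ) : approx4 ν e = ν.restrict (Oset e)
    + ENNReal.ofReal (alpha₁ ν e) • Measure.dirac (-e)
    + ENNReal.ofReal (alpha₂ ν e) • Measure.dirac e := rfl

lemma constraint_holds (hν2 : (∫⁻ y, ENNReal.ofReal (y ^ 2) ∂ν) < ⊤)
    (hν3 : (∫⁻ y, ENNReal.ofReal (|y| ^ 3) ∂ν) < ⊤) {e Λ : ℝ} (he : 0 < e) (hΛ : 0 < Λ)
    (hF : F4 ν e = Λ) : Constraint4 ν Λ (approx4 ν e) := by
  have hO : ν (Oset e) < ⊤ := outer_fin hν2 he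
  have ha1 := alpha₁_nonneg (ν := ν) hν2 hν3 he
  have ha2 := alpha₂_nonneg (ν := ν) hν2 hν3 he
  have hsum := alpha_sum (ν := ν) he
  have hdiff := alpha_diff (ν := ν) he
  have hmass : approx4 ν e Set.univ
      = ν (Oset e) + ENNReal.ofReal (alpha₁ ν e) + ENNReal.ofReal (alpha₂ ν e) := by
    rw [approx4_eq]
    simp [Measure.restrict_apply_univ]
  have hmeas2 : Measurable fun y : ℝ => y ^ 2 := by fun_prop
  have hmeas3 : Measurable fun y : ℝ => y ^ 3 := by fun_prop
  have hint2 : Integrable (fun y : ℝ => y ^ 2) (approx4 ν e) := by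
    rw [approx4_eq]
    exact (((int2 hν2).restrict).add_measure
      (integrable_smul_dirac hmeas2 ENNReal.ofReal_ne_top _)).add_measure
      (integrable_smul_dirac hmeas2 ENNReal.ofReal_ne_top _)
  have hint3 : Integrable (fun y : ℝ => y ^ 3) (approx4 ν e) := by
    rw [approx4_eq]
    exact (((int3 hν3).restrict).add_measure
      (integrable_smul_dirac hmeas3 ENNReal.ofReal_ne_top _)).add_measure
      (integrable_smul_dirac hmeas3 ENNReal.ofReal_ne_top _)
  have hfin : IsFiniteMeasure (approx4 ν e) := by
    constructor
    rw [hmass]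
    exact ENNReal.add_lt_top.2
      ⟨ENNReal.add_lt_top.2 ⟨hO, ENNReal.ofReal_lt_top⟩, ENNReal.ofReal_lt_top⟩
  refine ⟨hfin, ?_, hint2, ?_, hint3, ?_⟩
  · -- mass
    rw [hmass]
    have hΛeq : Λ = (ν (Oset e)).toReal + e⁻¹ ^ 2 * ∫ y in Iset e, y ^ 2 ∂ν := by
      rw [← hF, F4_eq]
    have hm2 := m2_nonneg (ν := ν) e
    have he2 : e⁻¹ ^ 2 * ∫ y in Iset e, y ^ 2 ∂ν = alpha₁ ν e + alpha₂ ν e := by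
      rw [hsum]; field_simp
    rw [hΛeq, he2, ENNReal.ofReal_add (ENNReal.toReal_nonneg) (by linarith),
      ENNReal.ofReal_toReal hO.ne, ENNReal.ofReal_add ha1 ha2, add_assoc]
  · -- second moment
    have hs : (∫ y, y ^ 2 ∂(approx4 ν e))
        = (∫ y in Oset e, y ^ 2 ∂ν) + alpha₁ ν e * e ^ 2 + alpha₂ ν e * e ^ 2 := by
      rw [approx4_eq, integral_add_measure (((int2 hν2).restrict).add_measure
          (integrable_smul_dirac hmeas2 ENNReal.ofReal_ne_top _))
          (integrable_smul_dirac hmeas2 ENNReal.ofReal_ne_top _),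
        integral_add_measure ((int2 hν2).restrict)
          (integrable_smul_dirac hmeas2 ENNReal.ofReal_ne_top _)]
      rw [integral_smul_measure, integral_smul_measure, integral_dirac, integral_dirac,
        ENNReal.toReal_ofReal ha1, ENNReal.toReal_ofReal ha2]
      simp only [smul_eq_mul]
      ring
    rw [hs, split_integral (int2 hν2) e]
    have h' : alpha₁ ν e * e ^ 2 + alpha₂ ν e * e ^ 2 = ∫ y in Iset e, y ^ 2 ∂ν := by
      have he2 : e ^ 2 ≠ 0 := by positivity
      have hr : alpha₁ ν e * e ^ 2 + alpha₂ ν e * e ^ 2 = (alpha₁ ν e + alpha₂ ν e) * e ^ 2 := by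
        ring
      rw [hr, hsum]
      field_simp
    linarith [h']
  · -- third moment
    have hs : (∫ y, y ^ 3 ∂(approx4 ν e))
        = (∫ y in Oset e, y ^ 3 ∂ν) + alpha₁ ν e * (-e) ^ 3 + alpha₂ ν e * e ^ 3 := by
      rw [approx4_eq, integral_add_measure (((int3 hν3).restrict).add_measure
          (integrable_smul_dirac hmeas3 ENNReal.ofReal_ne_top _))
          (integrable_smul_dirac hmeas3 ENNReal.ofReal_ne_top _),
        integral_add_measure ((int3 hν3).restrict)
          (integrable_smul_dirac hmeas3 ENNReal.ofReal_ne_top _)]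
      rw [integral_smul_measure, integral_smul_measure, integral_dirac, integral_dirac,
        ENNReal.toReal_ofReal ha1, ENNReal.toReal_ofReal ha2]
      simp only [smul_eq_mul]
      try ring
    rw [hs, split_integral (int3 hν3) e]
    have h' : alpha₁ ν e * (-e) ^ 3 + alpha₂ ν e * e ^ 3 = ∫ y in Iset e, y ^ 3 ∂ν := by
      have he3 : e ^ 3 ≠ 0 := by positivity
      have hr : alpha₁ ν e * (-e) ^ 3 + alpha₂ ν e * e ^ 3
          = (alpha₂ ν e - alpha₁ ν e) * e ^ 3 := by ring
      rw [hr, hdiff]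
      field_simp
    linarith [h']

lemma key_upper (hν2 : (∫⁻ y, ENNReal.ofReal (y ^ 2) ∂ν) < ⊤)
    (hν3 : (∫⁻ y, ENNReal.ofReal (|y| ^ 3) ∂ν) < ⊤)
    (hν4 : (∫⁻ y, ENNReal.ofReal (y ^ 4) ∂ν) < ⊤) {e : ℝ} (he : 0 < e) :
    Jfun4 ν (approx4 ν e)
      ≤ ENNReal.ofReal ((∫ y in Iset e, y ^ 4 ∂ν) + e ^ 2 * ∫ y in Iset e, y ^ 2 ∂ν) := by
  have ha1 := alpha₁_nonneg (ν := ν) hν2 hν3 he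
  have ha2 := alpha₂_nonneg (ν := ν) hν2 hν3 he
  set a1 : ℝ≥0∞ := ENNReal.ofReal (alpha₁ ν e) with ha1def
  set a2 : ℝ≥0∞ := ENNReal.ofReal (alpha₂ ν e) with ha2def
  have hρ : ν.restrict (Oset e) ≤ approx4 ν e := by
    rw [approx4_eq]
    exact le_trans (Measure.le_add_right le_rfl) (Measure.le_add_right le_rfl)
  have hinf : ν.restrict (Oset e) ≤ ν ⊓ approx4 ν e :=
    le_inf Measure.restrict_le_self hρ
  have h1 : ν - ν ⊓ approx4 ν e ≤ ν.restrict (Iset e) := by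
    apply Measure.sub_le_of_le_add
    calc ν = ν.restrict (Iset e) + ν.restrict (Iset e)ᶜ :=
        (Measure.restrict_add_restrict_compl (measIset e)).symm
    _ = ν.restrict (Iset e) + ν.restrict (Oset e) := by rw [Oset_eq_compl]
    _ ≤ ν.restrict (Iset e) + ν ⊓ approx4 ν e := add_le_add_right hinf _
  have h2 : approx4 ν e - ν ⊓ approx4 ν e ≤ a1 • Measure.dirac (-e) + a2 • Measure.dirac e := by
    apply Measure.sub_le_of_le_add
    have heq : approx4 ν e = (a1 • Measure.dirac (-e) + a2 • Measure.dirac e)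
        + ν.restrict (Oset e) := by
      rw [approx4_eq]
      abel
    calc approx4 ν e = (a1 • Measure.dirac (-e) + a2 • Measure.dirac e)
        + ν.restrict (Oset e) := heq
    _ ≤ (a1 • Measure.dirac (-e) + a2 • Measure.dirac e) + ν ⊓ approx4 ν e :=
        add_le_add_right hinf _
  have htv : tvDist ν (approx4 ν e)
      ≤ ν.restrict (Iset e) + (a1 • Measure.dirac (-e) + a2 • Measure.dirac e) :=
    add_le_add h1 h2
  have hJ : Jfun4 ν (approx4 ν e)
      ≤ ∫⁻ y, ENNReal.ofReal (y ^ 4)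
          ∂(ν.restrict (Iset e) + (a1 • Measure.dirac (-e) + a2 • Measure.dirac e)) :=
    lintegral_mono' htv le_rfl
  refine hJ.trans ?_
  rw [lintegral_add_measure, lintegral_add_measure, lintegral_smul_measure,
    lintegral_smul_measure, lintegral_dirac, lintegral_dirac]
  have hr : (∫⁻ y in Iset e, ENNReal.ofReal (y ^ 4) ∂ν)
      = ENNReal.ofReal (∫ y in Iset e, y ^ 4 ∂ν) :=
    (ofReal_integral_eq_lintegral_ofReal ((int4 hν4).restrict)
      (ae_of_all _ fun y => by positivity)).symm
  rw [hr]
  have hne : ((-e : ℝ)) ^ 4 = e ^ 4 := by ring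
  rw [hne]
  have h4 : (0:ℝ) ≤ e ^ 4 := by positivity
  rw [ha1def, ha2def, smul_eq_mul, smul_eq_mul, ← ENNReal.ofReal_mul ha1, ← ENNReal.ofReal_mul ha2,
    ← ENNReal.ofReal_add (by positivity) (mul_nonneg ha2 h4),
    ← ENNReal.ofReal_add (setIntegral_nonneg (measIset e) fun y _ => by positivity)
      (by positivity)]
  refine ENNReal.ofReal_le_ofReal ?_
  have hkey : alpha₁ ν e * e ^ 4 + alpha₂ ν e * e ^ 4 = e ^ 2 * ∫ y in Iset e, y ^ 2 ∂ν := by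
    have hr2 : alpha₁ ν e * e ^ 4 + alpha₂ ν e * e ^ 4
        = (alpha₁ ν e + alpha₂ ν e) * e ^ 4 := by ring
    rw [hr2, alpha_sum he]
    field_simp
  linarith [hkey]

lemma key_lower (hν2 : (∫⁻ y, ENNReal.ofReal (y ^ 2) ∂ν) < ⊤)
    (hν4 : (∫⁻ y, ENNReal.ofReal (y ^ 4) ∂ν) < ⊤) {e Λ : ℝ} (he : 0 < e) (hΛ0 : 0 < Λ)
    (hF : F4 ν e = Λ) {μb : Measure ℝ} (hc : Constraint4 ν Λ μb) :
    ENNReal.ofReal ((∫ y in Iset e, y ^ 4 ∂ν) + e ^ 2 * ∫ y in Iset e, y ^ 2 ∂ν)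
      ≤ Jfun4 ν μb := by
  obtain ⟨hfin, hmass, hint2b, hmom2, hint3b, hmom3⟩ := hc
  haveI := hfin
  have hmeas4 : Measurable fun y : ℝ => y ^ 4 := by fun_prop
  have hJdef : Jfun4 ν μb = (∫⁻ y, ENNReal.ofReal (y ^ 4) ∂(ν - ν ⊓ μb))
      + ∫⁻ y, ENNReal.ofReal (y ^ 4) ∂(μb - ν ⊓ μb) := by
    simp only [Jfun4, tvDist]
    exact lintegral_add_measure _ _ _
  set η : Measure ℝ := ν ⊓ μb with hη
  haveI : IsFiniteMeasure η := isFiniteMeasure_of_le μb inf_le_right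
  have hην : η ≤ ν := inf_le_left
  have hημ : η ≤ μb := inf_le_right
  set lam : Measure ℝ := ν - η with hlam
  set mu : Measure ℝ := μb - η with hmu
  have hlamle : lam ≤ ν := by rw [hlam]; exact Measure.sub_le
  have hνeq : lam + η = ν := by rw [hlam]; exact Measure.sub_add_cancel_of_le hην
  have hμeq : mu + η = μb := by rw [hmu]; exact Measure.sub_add_cancel_of_le hημ
  rw [hJdef]
  by_cases hcase : (∫⁻ y, ENNReal.ofReal (y ^ 4) ∂mu) = ⊤
  · rw [hcase, add_top]
    exact le_top
  have hlam4 : (∫⁻ y, ENNReal.ofReal (y ^ 4) ∂lam) < ⊤ :=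
    lt_of_le_of_lt (lintegral_mono' hlamle le_rfl) hν4
  have hint4lam : Integrable (fun y : ℝ => y ^ 4) lam :=
    integrable_of_ofReal hmeas4 (fun y => by positivity) hlam4
  have hint4mu : Integrable (fun y : ℝ => y ^ 4) mu :=
    integrable_of_ofReal hmeas4 (fun y => by positivity) (lt_top_iff_ne_top.2 hcase)
  have hint4η : Integrable (fun y : ℝ => y ^ 4) η := (int4 hν4).mono_measure hην
  have habs : ∀ y : ℝ, ‖phi e y‖ ≤ ‖y ^ 4‖ := fun y => by
    rw [Real.norm_eq_abs, Real.norm_eq_abs, abs_of_nonneg (by positivity : (0:ℝ) ≤ y ^ 4)]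
    exact abs_phi_le e y
  have hφmeas : AEStronglyMeasurable (phi e) := (phi_continuous e).aestronglyMeasurable
  have hφν : Integrable (phi e) ν :=
    (int4 hν4).mono ((phi_continuous e).aestronglyMeasurable) (ae_of_all _ habs)
  have hφlam : Integrable (phi e) lam :=
    hint4lam.mono ((phi_continuous e).aestronglyMeasurable) (ae_of_all _ habs)
  have hφmu : Integrable (phi e) mu :=
    hint4mu.mono ((phi_continuous e).aestronglyMeasurable) (ae_of_all _ habs)
  have hφη : Integrable (phi e) η :=
    hint4η.mono ((phi_continuous e).aestronglyMeasurable) (ae_of_all _ habs)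
  have hφμb : Integrable (phi e) μb := by
    rw [← hμeq]
    exact hφmu.add_measure hφη
  -- real-valued chain
  have hsplitν : (∫ y, phi e y ∂ν) = (∫ y, phi e y ∂lam) + ∫ y, phi e y ∂η := by
    rw [← hνeq, integral_add_measure hφlam hφη]
  have hsplitμ : (∫ y, phi e y ∂μb) = (∫ y, phi e y ∂mu) + ∫ y, phi e y ∂η := by
    rw [← hμeq, integral_add_measure hφmu hφη]
  have h1 : (∫ y, phi e y ∂lam) ≤ ∫ y, y ^ 4 ∂lam :=
    integral_mono hφlam hint4lam (phi_le e)
  have h2 : -(∫ y, phi e y ∂mu) ≤ ∫ y, y ^ 4 ∂mu := by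
    rw [← integral_neg]
    exact integral_mono hφmu.neg hint4mu fun y => neg_le.mp (neg_le_phi e y)
  have hstep1 : (∫ y, phi e y ∂ν) - (∫ y, phi e y ∂μb)
      ≤ (∫ y, y ^ 4 ∂lam) + ∫ y, y ^ 4 ∂mu := by
    rw [hsplitν, hsplitμ]
    linarith
  -- bound on ∫ phi dμb via the quadratic majorant
  have hμuniv : (μb Set.univ).toReal = Λ := by
    rw [hmass, ENNReal.toReal_ofReal hΛ0.le]
  have hintquad : Integrable (fun y : ℝ => e ^ 4 - 2 * e ^ 2 * y ^ 2) μb :=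
    (integrable_const _).sub (hint2b.const_mul _)
  have hstep2 : (∫ y, phi e y ∂μb) ≤ e ^ 4 * Λ - 2 * e ^ 2 * ∫ y, y ^ 2 ∂ν := by
    have hb : (∫ y, phi e y ∂μb) ≤ ∫ y, (e ^ 4 - 2 * e ^ 2 * y ^ 2) ∂μb :=
      integral_mono hφμb hintquad fun y => phi_le_quad e y
    refine hb.trans ?_
    rw [integral_sub (integrable_const _) (hint2b.const_mul _), integral_const,
      integral_const_mul, hmom2, measureReal_def, hμuniv, smul_eq_mul]
    ring_nf
    try rfl
  -- compute ∫ phi dν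
  have hOfin : ν (Oset e) ≠ ⊤ := (outer_fin hν2 he).ne
  haveI : IsFiniteMeasure (ν.restrict (Oset e)) := by
    constructor
    rw [Measure.restrict_apply_univ]
    exact outer_fin hν2 he
  have hφν_eq : (∫ y, phi e y ∂ν) = (∫ y in Iset e, y ^ 4 ∂ν)
      + (e ^ 4 * (ν (Oset e)).toReal - 2 * e ^ 2 * ∫ y in Oset e, y ^ 2 ∂ν) := by
    rw [split_integral hφν e]
    have hOeq : (∫ y in Oset e, phi e y ∂ν) = ∫ y in Oset e, (e ^ 4 - 2 * e ^ 2 * y ^ 2) ∂ν :=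
      setIntegral_congr_fun (measOset e) fun y hy => phi_outer he.le (le_of_lt hy)
    have hIeq : (∫ y in Iset e, phi e y ∂ν) = ∫ y in Iset e, y ^ 4 ∂ν :=
      setIntegral_congr_fun (measIset e) fun y hy => phi_inner he.le hy
    rw [hOeq, hIeq, integral_sub (integrable_const _) (((int2 hν2).restrict).const_mul _),
      integral_const, integral_const_mul, measureReal_def, Measure.restrict_apply_univ, smul_eq_mul]
    ring
  have hΛeq : Λ = (ν (Oset e)).toReal + e⁻¹ ^ 2 * ∫ y in Iset e, y ^ 2 ∂ν := by
    rw [← hF, F4_eq]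
  have hM2 : (∫ y, y ^ 2 ∂ν) = (∫ y in Oset e, y ^ 2 ∂ν) + ∫ y in Iset e, y ^ 2 ∂ν :=
    split_integral (int2 hν2) e
  have hepow : e ^ 4 * (e⁻¹ ^ 2 * ∫ y in Iset e, y ^ 2 ∂ν)
      = e ^ 2 * ∫ y in Iset e, y ^ 2 ∂ν := by
    have he0 : e ≠ 0 := he.ne'
    field_simp
  have hfinal : (∫ y in Iset e, y ^ 4 ∂ν) + e ^ 2 * (∫ y in Iset e, y ^ 2 ∂ν)
      ≤ (∫ y, y ^ 4 ∂lam) + ∫ y, y ^ 4 ∂mu := by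
    have hΛ4 : e ^ 4 * Λ = e ^ 4 * (ν (Oset e)).toReal
        + e ^ 2 * ∫ y in Iset e, y ^ 2 ∂ν := by
      rw [hΛeq, mul_add, hepow]
    nlinarith [hstep1, hstep2, hφν_eq, hM2, hΛ4]
  -- back to ENNReal
  have hl : (∫⁻ y, ENNReal.ofReal (y ^ 4) ∂lam) = ENNReal.ofReal (∫ y, y ^ 4 ∂lam) :=
    (ofReal_integral_eq_lintegral_ofReal hint4lam (ae_of_all _ fun y => by positivity)).symm
  have hm : (∫⁻ y, ENNReal.ofReal (y ^ 4) ∂mu) = ENNReal.ofReal (∫ y, y ^ 4 ∂mu) :=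
    (ofReal_integral_eq_lintegral_ofReal hint4mu (ae_of_all _ fun y => by positivity)).symm
  rw [hl, hm, ← ENNReal.ofReal_add (integral_nonneg fun y => by positivity)
    (integral_nonneg fun y => by positivity)]
  exact ENNReal.ofReal_le_ofReal hfinal

lemma q2_le_M2 (hν2 : (∫⁻ y, ENNReal.ofReal (y ^ 2) ∂ν) < ⊤) (e : ℝ) :
    (∫ y in Iset e, y ^ 2 ∂ν) ≤ ∫ y, y ^ 2 ∂ν :=
  setIntegral_le_integral (int2 hν2) (ae_of_all _ fun y => sq_nonneg y)

lemma nuO_bound (hν2 : (∫⁻ y, ENNReal.ofReal (y ^ 2) ∂ν) < ⊤) {e : ℝ} (he : 0 < e) :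
    (cConst * e) ^ 2 * (ν (Oset e)).toReal ≤ ∫ y, y ^ 2 ∂ν := by
  set c : ℝ≥0∞ := ENNReal.ofReal ((cConst * e) ^ 2) with hc
  have hsub : Oset e ⊆ {y : ℝ | c ≤ ENNReal.ofReal (y ^ 2)} := by
    intro y hy
    simp only [Oset, mem_setOf_eq] at hy ⊢
    refine ENNReal.ofReal_le_ofReal ?_
    have h0 : 0 ≤ cConst * e := (mul_pos cPos he).le
    calc (cConst * e) ^ 2 ≤ |y| ^ 2 := by nlinarith [abs_nonneg y]
    _ = y ^ 2 := sq_abs y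
  have hm : Measurable fun y : ℝ => ENNReal.ofReal (y ^ 2) := by measurability
  have hmarkov := mul_meas_ge_le_lintegral (μ := ν) hm c
  have h1 : c * ν (Oset e) ≤ ∫⁻ y, ENNReal.ofReal (y ^ 2) ∂ν :=
    le_trans (mul_le_mul_right (measure_mono hsub) c) hmarkov
  have hM : (∫⁻ y, ENNReal.ofReal (y ^ 2) ∂ν) = ENNReal.ofReal (∫ y, y ^ 2 ∂ν) :=
    (ofReal_integral_eq_lintegral_ofReal (int2 hν2) (ae_of_all _ fun y => sq_nonneg y)).symm
  have h2 := ENNReal.toReal_mono (by rw [hM]; exact ENNReal.ofReal_ne_top) h1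
  rw [ENNReal.toReal_mul, hM, hc, ENNReal.toReal_ofReal (by positivity),
    ENNReal.toReal_ofReal (integral_nonneg fun y => sq_nonneg y)] at h2
  exact h2

lemma m4_le (hν2 : (∫⁻ y, ENNReal.ofReal (y ^ 2) ∂ν) < ⊤)
    (hν4 : (∫⁻ y, ENNReal.ofReal (y ^ 4) ∂ν) < ⊤) {e : ℝ} (he : 0 < e) :
    (∫ y in Iset e, y ^ 4 ∂ν) ≤ e ^ 2 * ∫ y in Iset e, y ^ 2 ∂ν := by
  have hmono : (∫ y in Iset e, y ^ 4 ∂ν) ≤ ∫ y in Iset e, e ^ 2 * y ^ 2 ∂ν := by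
    refine setIntegral_mono_on ((int4 hν4).restrict) (((int2 hν2).const_mul _).restrict)
      (measIset e) fun y hy => ?_
    have hy' : |y| ≤ cConst * e := hy
    have hce : cConst * e ≤ e := by nlinarith [cPos, cLt1]
    have hy2 : y ^ 2 ≤ e ^ 2 := by
      rw [← sq_abs]
      nlinarith [abs_nonneg y]
    nlinarith [sq_nonneg y]
  rwa [integral_const_mul] at hmono


end Aux

/-- The case `n = 4`: `α₁, α₂ ≥ 0`, the measure `ν̄_ε = 1_{|y|>cε} ν + α₁ δ_{-ε} + α₂ δ_ε`
(with `ε = ε(Λ)` the unique solution of `F(ε) = Λ`) solves problem `Ω_{4,Λ}`, and the optimal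
value satisfies `E_4(Λ) = o(Λ^{-1})` as `Λ → ∞`. -/
theorem stmt_11 (ν : Measure ℝ)
    (hν0 : ν {0} = 0) (hac : ν ≪ volume) (hνinf : ν Set.univ = ⊤)
    (hν2 : (∫⁻ y, ENNReal.ofReal (y ^ 2) ∂ν) < ⊤)
    (hν3 : (∫⁻ y, ENNReal.ofReal (|y| ^ 3) ∂ν) < ⊤)
    (hν4 : (∫⁻ y, ENNReal.ofReal (y ^ 4) ∂ν) < ⊤)
    (ε : ℝ → ℝ)
    (hε : ∀ Λ, 0 < Λ → 0 < ε Λ)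
    (hεdef : ∀ Λ, 0 < Λ → F4 ν (ε Λ) = Λ) :
    (∀ Λ, 0 < Λ →
      0 ≤ alpha₁ ν (ε Λ) ∧ 0 ≤ alpha₂ ν (ε Λ) ∧
      Constraint4 ν Λ (approx4 ν (ε Λ)) ∧
      ∀ μ : Measure ℝ, Constraint4 ν Λ μ → Jfun4 ν (approx4 ν (ε Λ)) ≤ Jfun4 ν μ) ∧
    Filter.Tendsto (fun Λ => Λ * (Jfun4 ν (approx4 ν (ε Λ))).toReal)
      Filter.atTop (nhds 0) := by
  have M2r : ℝ := 0
  constructor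
  · intro Λ hΛ
    have he := hε Λ hΛ
    refine ⟨alpha₁_nonneg hν2 hν3 he, alpha₂_nonneg hν2 hν3 he,
      constraint_holds hν2 hν3 he hΛ (hεdef Λ hΛ), fun μ hμ => ?_⟩
    exact (key_upper hν2 hν3 hν4 he).trans (key_lower hν2 hν4 he hΛ (hεdef Λ hΛ) hμ)
  · -- the limit Λ · E₄(Λ) → 0
    set q2 : ℝ → ℝ := fun e => ∫ y in Iset e, y ^ 2 ∂ν with hq2def
    set M2 : ℝ := ∫ y, y ^ 2 ∂ν with hM2def
    have hq2nn : ∀ e, 0 ≤ q2 e := fun e => m2_nonneg (ν := ν) e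
    have hq2le : ∀ e, q2 e ≤ M2 := fun e => q2_le_M2 hν2 e
    -- Step A : ε Λ is eventually small
    have hsmall : ∀ e₀ : ℝ, 0 < e₀ → ∀ᶠ Λ in atTop, ε Λ ≤ e₀ := by
      intro e₀ he₀
      set B : ℝ := (ν (Oset e₀)).toReal + e₀⁻¹ ^ 2 * M2 with hBdef
      filter_upwards [eventually_ge_atTop (max 1 (B + 1))] with Λ hΛge
      have hΛ1 : (1:ℝ) ≤ Λ := le_trans (le_max_left _ _) hΛge
      have hΛB : B + 1 ≤ Λ := le_trans (le_max_right _ _) hΛge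
      have hΛpos : 0 < Λ := lt_of_lt_of_le one_pos hΛ1
      by_contra hcon
      push_neg at hcon
      have he := hε Λ hΛpos
      have heq : F4 ν (ε Λ) = Λ := hεdef Λ hΛpos
      rw [F4_eq] at heq
      have hsub : Oset (ε Λ) ⊆ Oset e₀ := by
        intro y hy
        simp only [Oset, mem_setOf_eq] at hy ⊢
        have : cConst * e₀ ≤ cConst * ε Λ := by
          exact mul_le_mul_of_nonneg_left hcon.le cPos.le
        linarith
      have hb1 : (ν (Oset (ε Λ))).toReal ≤ (ν (Oset e₀)).toReal :=
        ENNReal.toReal_mono (outer_fin hν2 he₀).ne (measure_mono hsub)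
      have hb2 : (ε Λ)⁻¹ ^ 2 * q2 (ε Λ) ≤ e₀⁻¹ ^ 2 * M2 := by
        have hinv : (ε Λ)⁻¹ ≤ e₀⁻¹ := by
          apply inv_anti₀ he₀ hcon.le
        have hinvsq : (ε Λ)⁻¹ ^ 2 ≤ e₀⁻¹ ^ 2 := by
          apply pow_le_pow_left₀ (by positivity) hinv
        exact mul_le_mul hinvsq (hq2le _) (hq2nn _) (by positivity)
      have : Λ ≤ B := by
        rw [← heq, hBdef]
        exact add_le_add hb1 hb2
      linarith
    -- Step B : q2 (ε Λ) → 0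
    have hB : Tendsto (fun Λ => q2 (ε Λ)) atTop (nhds 0) := by
      set μ' : Measure ℝ := ν.withDensity fun y => ENNReal.ofReal (y ^ 2) with hμ'def
      have hμ'app : ∀ e : ℝ, μ' (Iset e) = ∫⁻ y in Iset e, ENNReal.ofReal (y ^ 2) ∂ν :=
        fun e => withDensity_apply _ (measIset e)
      have hμ'fin : ∀ e : ℝ, μ' (Iset e) ≠ ⊤ := by
        intro e
        rw [hμ'app e]
        exact (lt_of_le_of_lt (lintegral_mono' Measure.restrict_le_self le_rfl) hν2).ne
      have hq2eq : ∀ e : ℝ, q2 e = (μ' (Iset e)).toReal := by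
        intro e
        rw [hμ'app e, ← ofReal_integral_eq_lintegral_ofReal ((int2 hν2).restrict)
          (ae_of_all _ fun y => sq_nonneg y), ENNReal.toReal_ofReal (hq2nn e)]
      have hIsetmono : ∀ e e' : ℝ, e ≤ e' → Iset e ⊆ Iset e' := by
        intro e e' hee' y hy
        simp only [Iset, mem_setOf_eq] at hy ⊢
        exact hy.trans (mul_le_mul_of_nonneg_left hee' cPos.le)
      set s : ℕ → Set ℝ := fun n => Iset ((n + 1 : ℝ)⁻¹) with hsdef
      have hanti : Antitone s := by
        intro n m hnm
        apply hIsetmono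
        apply inv_anti₀ (by positivity)
        exact_mod_cast by exact_mod_cast add_le_add_left (Nat.cast_le.2 hnm) 1
      have hiInter : ⋂ n, s n = {(0:ℝ)} := by
        ext y
        simp only [mem_iInter, mem_singleton_iff, hsdef, Iset, mem_setOf_eq]
        constructor
        · intro h
          by_contra hy0
          have hy : 0 < |y| := abs_pos.2 hy0
          obtain ⟨n, hn⟩ := exists_nat_gt (cConst / |y|)
          have h1 := h n
          have h2 : cConst / |y| < n + 1 := by linarith
          rw [div_lt_iff₀ hy] at h2
          have h3 : cConst * ((n:ℝ) + 1)⁻¹ < |y| := by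
            rw [mul_inv_lt_iff₀ (by positivity)]
            linarith [mul_comm |y| ((n:ℝ)+1)]
          linarith
        · intro h n
          rw [h]
          simp only [abs_zero]
          exact mul_nonneg cPos.le (by positivity)
      have hμ'0 : μ' {(0:ℝ)} = 0 := by
        rw [hμ'def, withDensity_apply _ (measurableSet_singleton (0:ℝ)),
          Measure.restrict_eq_zero.mpr hν0, lintegral_zero_measure]
      have htendsN : Tendsto (fun n => μ' (s n)) atTop (nhds 0) := by
        have h := tendsto_measure_iInter_atTop (μ := μ')
          (fun n => (measIset _).nullMeasurableSet) hanti ⟨0, hμ'fin _⟩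
        rw [hiInter, hμ'0] at h
        exact h
      rw [tendsto_order]
      constructor
      · intro a ha
        filter_upwards with Λ
        exact lt_of_lt_of_le ha (hq2nn _)
      · intro a ha
        have hev : ∀ᶠ n in atTop, μ' (s n) < ENNReal.ofReal a :=
          htendsN.eventually_lt_const (by simpa using ENNReal.ofReal_pos.2 ha)
        obtain ⟨n, hn⟩ := hev.exists
        filter_upwards [hsmall ((n + 1 : ℝ)⁻¹) (by positivity)] with Λ h1
        have hsubset : Iset (ε Λ) ⊆ s n := hIsetmono _ _ h1
        have hle : q2 (ε Λ) ≤ (μ' (s n)).toReal := by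
          rw [hq2eq]
          exact ENNReal.toReal_mono (hμ'fin _) (measure_mono hsubset)
        have hlt : (μ' (s n)).toReal < a := by
          rw [← ENNReal.lt_ofReal_iff_toReal_lt (hμ'fin _)]
          exact hn
        exact lt_of_le_of_lt hle hlt
    -- Step C : squeeze
    have hc2 : (0:ℝ) < cConst ^ 2 := pow_pos cPos 2
    set g : ℝ → ℝ := fun Λ => 2 * ((M2 / cConst ^ 2) * q2 (ε Λ) + q2 (ε Λ) ^ 2) with hgdef
    have hgt : Tendsto g atTop (nhds 0) := by
      have hcont : Continuous fun t : ℝ => 2 * ((M2 / cConst ^ 2) * t + t ^ 2) := by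
        continuity
      have := (hcont.tendsto 0).comp hB
      simpa [hgdef, Function.comp_def] using this
    refine tendsto_of_tendsto_of_tendsto_of_le_of_le' tendsto_const_nhds hgt ?_ ?_
    · filter_upwards [eventually_ge_atTop (0:ℝ)] with Λ hΛ
      exact mul_nonneg hΛ ENNReal.toReal_nonneg
    · filter_upwards [eventually_gt_atTop (0:ℝ)] with Λ hΛ
      have he := hε Λ hΛ
      have heq : F4 ν (ε Λ) = Λ := hεdef Λ hΛ
      rw [F4_eq] at heq
      set e : ℝ := ε Λ with hedef
      have hJle : (Jfun4 ν (approx4 ν e)).toReal ≤ (∫ y in Iset e, y ^ 4 ∂ν) + e ^ 2 * q2 e :=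
        ENNReal.toReal_le_of_le_ofReal
          (add_nonneg (setIntegral_nonneg (measIset e) fun y _ => by positivity)
            (mul_nonneg (by positivity) (hq2nn e)))
          (key_upper hν2 hν3 hν4 he)
      have hm4 : (∫ y in Iset e, y ^ 4 ∂ν) ≤ e ^ 2 * q2 e := m4_le hν2 hν4 he
      have hJle2 : (Jfun4 ν (approx4 ν e)).toReal ≤ 2 * (e ^ 2 * q2 e) := by linarith
      have hstep : Λ * (Jfun4 ν (approx4 ν e)).toReal ≤ Λ * (2 * (e ^ 2 * q2 e)) :=
        mul_le_mul_of_nonneg_left hJle2 hΛ.le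
      refine hstep.trans ?_
      have hO : (cConst * e) ^ 2 * (ν (Oset e)).toReal ≤ M2 := nuO_bound hν2 he
      have hObd : e ^ 2 * (ν (Oset e)).toReal ≤ M2 / cConst ^ 2 := by
        rw [le_div_iff₀ hc2]
        nlinarith [ENNReal.toReal_nonneg (a := ν (Oset e))]
      have hΛval : Λ = (ν (Oset e)).toReal + e⁻¹ ^ 2 * q2 e := heq.symm
      have hinv : e⁻¹ ^ 2 * e ^ 2 = 1 := by
        field_simp
      have hexp : Λ * (2 * (e ^ 2 * q2 e))
          = 2 * ((e ^ 2 * (ν (Oset e)).toReal) * q2 e + (e⁻¹ ^ 2 * e ^ 2) * q2 e ^ 2) := by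
        rw [hΛval]
        ring
      rw [hexp, hinv, hgdef]
      have := hq2nn e
      nlinarith [hObd, hq2nn e]
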